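/- arXiv:math/9204219 — 2 statements merged into one kernel-verified Lean document; each statement's English description precedes it below -/
import Mathlib

section
/- If a ladder system ζ on S ⊆ [ω, ω₁) satisfies 3-uniformization and each h_α : ω → ω is a function with positive values, then there is a ladder system η on S satisfying H-uniformization, where H = ⟨h_α : α ∈ S⟩. (More precisely: composing each tree-like ladder ζ_α with the partial-sum function ψ_α(n) = Σ_{j≤n} h_α(j) yields a ladder system ζ' satisfying H-uniformization, via coding each H-coloring as a 3-coloring.) -/
open Ordinal Set

noncomputable def omega1 : Ordinal := (Cardinal.aleph 1).ord

def IsLadderOn (δ : Ordinal) (η : ℕ → Ordinal) : Prop :=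
  StrictMono η ∧ (∀ n, η n < δ) ∧ ∀ β < δ, ∃ n, β ≤ η n

def IsLadderAt (α : Ordinal) (η : ℕ → Ordinal) : Prop :=
  ∃ (δ : Ordinal) (n : ℕ), Order.IsSuccLimit δ ∧ α = δ + n ∧ IsLadderOn δ η

def IsClubOmega1 (C : Set Ordinal) : Prop :=
  C ⊆ Set.Iio omega1 ∧
  (∀ α < omega1, ∃ β ∈ C, α < β) ∧
  (∀ δ < omega1, Order.IsSuccLimit δ → (∀ α < δ, ∃ β ∈ C, α < β ∧ β < δ) → δ ∈ C)

def IsStat (S : Set Ordinal) : Prop := ∀ C, IsClubOmega1 C → (S ∩ C).Nonempty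

def UnifBelow (S : Set Ordinal) (η : Ordinal → ℕ → Ordinal) (h : Ordinal → ℕ → ℕ) : Prop :=
  ∀ c : Ordinal → ℕ → ℕ, (∀ α ∈ S, ∀ n, c α n < h α n) →
    ∃ (f : Ordinal → ℕ) (fs : Ordinal → ℕ), ∀ α ∈ S, ∀ n, fs α ≤ n → f (η α n) = c α n

def LambdaUnif (S : Set Ordinal) (η : Ordinal → ℕ → Ordinal) (l : ℕ) : Prop :=
  UnifBelow S η (fun _ _ => l)

def OmegaUnif (S : Set Ordinal) (η : Ordinal → ℕ → Ordinal) : Prop :=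
  ∀ c : Ordinal → ℕ → ℕ,
    ∃ (f : Ordinal → ℕ) (fs : Ordinal → ℕ), ∀ α ∈ S, ∀ n, fs α ≤ n → f (η α n) = c α n

def TreeLike (S : Set Ordinal) (η : Ordinal → ℕ → Ordinal) : Prop :=
  ∀ α ∈ S, ∀ β ∈ S, ∀ n m, η α n = η β m → n = m ∧ ∀ k ≤ n, η α k = η β k

def StronglyTreeLike (S : Set Ordinal) (η : Ordinal → ℕ → Ordinal) (F : Ordinal → ℕ) : Prop :=
  TreeLike S η ∧ ∀ α ∈ S, ∀ β ∈ S, ∀ n m, η α n = η β m → F α = F β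
namespace Stmt5Aux

lemma omega1_isLimit : Order.IsSuccLimit omega1 :=
  Cardinal.isSuccLimit_ord (Cardinal.aleph0_le_aleph 1)

lemma add_nat_lt_limit {δ a : Ordinal} (hδ : Order.IsSuccLimit δ) (ha : a < δ) (n : ℕ) :
    a + (n : Ordinal) < δ := by
  induction n with
  | zero => simpa using ha
  | succ k ih =>
      have h1 : a + ((k + 1 : ℕ) : Ordinal) = Order.succ (a + (k : ℕ)) := by
        push_cast
        rw [← add_assoc, Ordinal.add_one_eq_succ]
      rw [h1]
      exact hδ.succ_lt ih

noncomputable def natPart (o : Ordinal) : ℕ :=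
  Classical.choose (Ordinal.lt_omega0.mp (Ordinal.mod_lt o Ordinal.omega0_ne_zero))

lemma natPart_spec (o : Ordinal) : o % Ordinal.omega0 = (natPart o : Ordinal) :=
  Classical.choose_spec (Ordinal.lt_omega0.mp (Ordinal.mod_lt o Ordinal.omega0_ne_zero))

lemma exists_inj (M : Ordinal) (hM : M < omega1) :
    ∃ e : Ordinal → ℕ, Set.InjOn e (Set.Iic M) := by
  have hM1 : M + 1 < omega1 := by
    rw [Ordinal.add_one_eq_succ]
    exact omega1_isLimit.succ_lt hM
  have hcard : (M + 1).card ≤ Cardinal.aleph0 := by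
    have h2 : (M + 1).card < Cardinal.aleph 1 := Cardinal.lt_ord.mp hM1
    rwa [← Cardinal.succ_aleph0, Order.lt_succ_iff] at h2
  haveI hcnt : Countable (M + 1).ToType := by
    rw [← Cardinal.mk_le_aleph0_iff, Cardinal.mk_toType]
    exact hcard
  obtain ⟨g, hg⟩ := Countable.exists_injective_nat (M + 1).ToType
  let e0 : Set.Iio (M + 1) → ℕ := fun x => g ((Ordinal.ToType.mk (o := M + 1)) x)
  have he0 : Function.Injective e0 := by
    intro x y hxy
    exact (Ordinal.ToType.mk (o := M + 1)).injective (hg hxy)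
  refine ⟨fun x => if hx : x < M + 1 then e0 ⟨x, hx⟩ else 0, ?_⟩
  intro x hx y hy hxy
  have hx1 : x < M + 1 := by
    rw [Ordinal.add_one_eq_succ, Order.lt_succ_iff]; exact hx
  have hy1 : y < M + 1 := by
    rw [Ordinal.add_one_eq_succ, Order.lt_succ_iff]; exact hy
  simp only [dif_pos hx1, dif_pos hy1] at hxy
  have := he0 hxy
  exact congrArg Subtype.val this

noncomputable def eF (M : Ordinal) : Ordinal → ℕ :=
  if hM : M < omega1 then (exists_inj M hM).choose else fun _ => 0

lemma eF_inj {M : Ordinal} (hM : M < omega1) : Set.InjOn (eF M) (Set.Iic M) := by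
  rw [eF, dif_pos hM]
  exact (exists_inj M hM).choose_spec

noncomputable def pr (x y : Ordinal) : Ordinal :=
  Ordinal.omega0 * (max x y / Ordinal.omega0) +
    ((Nat.pair (natPart (max x y)) (Nat.pair (eF (max x y) x) (eF (max x y) y)) : ℕ) : Ordinal)

lemma le_pr (x y : Ordinal) : max x y ≤ pr x y := by
  unfold pr
  conv_lhs => rw [← Ordinal.div_add_mod (max x y) Ordinal.omega0, natPart_spec]
  exact add_le_add_right (by exact_mod_cast Nat.left_le_pair _ _) _

lemma left_le_pr (x y : Ordinal) : x ≤ pr x y := (le_max_left x y).trans (le_pr x y)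

lemma right_le_pr (x y : Ordinal) : y ≤ pr x y := (le_max_right x y).trans (le_pr x y)

lemma pr_lt {x y δ : Ordinal} (hδ : Order.IsSuccLimit δ) (hx : x < δ) (hy : y < δ) : pr x y < δ := by
  have h1 : Ordinal.omega0 * (max x y / Ordinal.omega0) ≤ max x y := Ordinal.mul_div_le _ _
  have h2 : max x y < δ := max_lt hx hy
  exact add_nat_lt_limit hδ (h1.trans_lt h2) _

lemma pr_inj {x y x' y' : Ordinal} (hx : x < omega1) (hy : y < omega1)
    (hx' : x' < omega1) (hy' : y' < omega1) (heq : pr x y = pr x' y') :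
    x = x' ∧ y = y' := by
  have hM : max x y < omega1 := max_lt hx hy
  have hM' : max x' y' < omega1 := max_lt hx' hy'
  unfold pr at heq
  have hdiv : max x y / Ordinal.omega0 = max x' y' / Ordinal.omega0 := by
    have h := congrArg (· / Ordinal.omega0) heq
    rwa [Ordinal.mul_add_div _ Ordinal.omega0_ne_zero,
      Ordinal.mul_add_div _ Ordinal.omega0_ne_zero,
      Ordinal.div_eq_zero_of_lt (Ordinal.nat_lt_omega0 _),
      Ordinal.div_eq_zero_of_lt (Ordinal.nat_lt_omega0 _), add_zero, add_zero] at h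
  rw [hdiv] at heq
  have hKeq := (add_right_inj _).mp heq
  have hKK : Nat.pair (natPart (max x y)) (Nat.pair (eF (max x y) x) (eF (max x y) y)) =
      Nat.pair (natPart (max x' y')) (Nat.pair (eF (max x' y') x') (eF (max x' y') y')) := by
    exact_mod_cast hKeq
  have h1 : natPart (max x y) = natPart (max x' y') := by
    have := congrArg (fun z => (Nat.unpair z).1) hKK
    simpa [Nat.unpair_pair] using this
  have h2 : Nat.pair (eF (max x y) x) (eF (max x y) y) =
      Nat.pair (eF (max x' y') x') (eF (max x' y') y') := by
    have := congrArg (fun z => (Nat.unpair z).2) hKK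
    simpa [Nat.unpair_pair] using this
  have h3 : eF (max x y) x = eF (max x' y') x' := by
    have := congrArg (fun z => (Nat.unpair z).1) h2
    simpa [Nat.unpair_pair] using this
  have h4 : eF (max x y) y = eF (max x' y') y' := by
    have := congrArg (fun z => (Nat.unpair z).2) h2
    simpa [Nat.unpair_pair] using this
  have hMM : max x y = max x' y' := by
    conv_lhs => rw [← Ordinal.div_add_mod (max x y) Ordinal.omega0]
    conv_rhs => rw [← Ordinal.div_add_mod (max x' y') Ordinal.omega0]
    rw [natPart_spec, natPart_spec, hdiv, h1]
  rw [← hMM] at h3 h4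
  constructor
  · exact eF_inj hM (le_max_left x y) (by rw [hMM] at *; exact (le_max_left x' y').trans hMM.ge) h3
  · exact eF_inj hM (le_max_right x y) (by rw [hMM] at *; exact (le_max_right x' y').trans hMM.ge) h4


/-- Tree-like history coding of a ladder. -/
noncomputable def cd (g : ℕ → Ordinal) : ℕ → Ordinal
  | 0 => pr (pr 0 (g 0)) ((0 : ℕ) : Ordinal)
  | n + 1 => pr (pr (cd g n) (g (n + 1))) ((n + 1 : ℕ) : Ordinal)

lemma cd_lt_limit {g : ℕ → Ordinal} {δ : Ordinal} (hδ : Order.IsSuccLimit δ)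
    (hg : ∀ i, g i < δ) : ∀ n, cd g n < δ := by
  intro n
  induction n with
  | zero =>
      exact pr_lt hδ (pr_lt hδ hδ.pos (hg 0)) (Ordinal.natCast_lt_of_isSuccLimit hδ 0)
  | succ k ih =>
      exact pr_lt hδ (pr_lt hδ ih (hg (k + 1))) (Ordinal.natCast_lt_of_isSuccLimit hδ (k + 1))

lemma cd_lt_omega1 {g : ℕ → Ordinal} (hg : ∀ i, g i < omega1) (n : ℕ) :
    cd g n < omega1 :=
  cd_lt_limit omega1_isLimit hg n

lemma cd_ge {g : ℕ → Ordinal} (n : ℕ) : g n ≤ cd g n := by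
  cases n with
  | zero => exact (right_le_pr 0 (g 0)).trans (left_le_pr _ _)
  | succ k => exact (right_le_pr (cd g k) (g (k + 1))).trans (left_le_pr _ _)

lemma cd_inj {g g' : ℕ → Ordinal} (hg : ∀ i, g i < omega1) (hg' : ∀ i, g' i < omega1) :
    ∀ {n m : ℕ}, cd g n = cd g' m → n = m ∧ ∀ i ≤ n, g i = g' i := by
  have hcd := cd_lt_omega1 hg
  have hcd' := cd_lt_omega1 hg'
  have hω : ∀ k : ℕ, ((k : ℕ) : Ordinal) < omega1 := fun k =>
    (Ordinal.nat_lt_omega0 k).trans_le (Ordinal.omega0_le_of_isSuccLimit omega1_isLimit)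
  intro n
  induction n with
  | zero =>
      intro m heq
      cases m with
      | zero =>
          refine ⟨rfl, fun i hi => ?_⟩
          interval_cases i
          have h1 := pr_inj (pr_lt omega1_isLimit omega1_isLimit.pos (hg 0))
            (hω 0) (pr_lt omega1_isLimit omega1_isLimit.pos (hg' 0)) (hω 0) heq
          have h2 := pr_inj omega1_isLimit.pos (hg 0) omega1_isLimit.pos (hg' 0) h1.1
          exact h2.2
      | succ k =>
          have h1 := pr_inj (pr_lt omega1_isLimit omega1_isLimit.pos (hg 0)) (hω 0)
            (pr_lt omega1_isLimit (hcd' k) (hg' (k + 1))) (hω (k + 1)) heq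
          have : (0 : ℕ) = k + 1 := by exact_mod_cast h1.2
          omega
  | succ k ih =>
      intro m heq
      cases m with
      | zero =>
          have h1 := pr_inj (pr_lt omega1_isLimit (hcd k) (hg (k + 1))) (hω (k + 1))
            (pr_lt omega1_isLimit omega1_isLimit.pos (hg' 0)) (hω 0) heq
          have : k + 1 = (0 : ℕ) := by exact_mod_cast h1.2
          omega
      | succ l =>
          have h1 := pr_inj (pr_lt omega1_isLimit (hcd k) (hg (k + 1))) (hω (k + 1))
            (pr_lt omega1_isLimit (hcd' l) (hg' (l + 1))) (hω (l + 1)) heq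
          have hkl : k + 1 = l + 1 := by exact_mod_cast h1.2
          have hk : k = l := by omega
          subst hk
          have h2 := pr_inj (hcd k) (hg (k + 1)) (hcd' k) (hg' (k + 1)) h1.1
          obtain ⟨-, hrest⟩ := ih h2.1
          refine ⟨rfl, fun i hi => ?_⟩
          rcases Nat.eq_or_lt_of_le hi with h | h
          · subst h; exact h2.2
          · exact hrest i (Nat.lt_succ_iff.mp h)


lemma cd_strictMono {g : ℕ → Ordinal} (hg : ∀ i, g i < omega1) : StrictMono (cd g) := by
  apply strictMono_nat_of_lt_succ
  intro n
  have hle : cd g n ≤ cd g (n + 1) :=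
    (left_le_pr (cd g n) (g (n + 1))).trans (left_le_pr _ _)
  refine lt_of_le_of_ne hle fun he => ?_
  have := (cd_inj hg hg he).1
  omega

/-- partial sums of `h + 1`. -/
def psi (h : Ordinal → ℕ → ℕ) (a : Ordinal) (n : ℕ) : ℕ :=
  ∑ j ∈ Finset.range (n + 1), (h a j + 1)

lemma psi_succ (h : Ordinal → ℕ → ℕ) (a : Ordinal) (n : ℕ) :
    psi h a (n + 1) = psi h a n + (h a (n + 1) + 1) :=
  Finset.sum_range_succ _ _

lemma psi_ge (h : Ordinal → ℕ → ℕ) (a : Ordinal) (n : ℕ) : n + 1 ≤ psi h a n := by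
  induction n with
  | zero => simp [psi]
  | succ k ih => rw [psi_succ]; omega

lemma psi_strictMono (h : Ordinal → ℕ → ℕ) (a : Ordinal) : StrictMono (psi h a) :=
  strictMono_nat_of_lt_succ fun n => by rw [psi_succ]; omega

lemma psi_unbounded (h : Ordinal → ℕ → ℕ) (a : Ordinal) (i : ℕ) :
    ∃ n, i < psi h a n :=
  ⟨i, by have := psi_ge h a i; omega⟩

/-- index of the block containing `i`. -/
def bIdx (h : Ordinal → ℕ → ℕ) (a : Ordinal) (i : ℕ) : ℕ :=
  Nat.find (psi_unbounded h a i)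

def bPrev (h : Ordinal → ℕ → ℕ) (a : Ordinal) (i : ℕ) : ℕ :=
  match bIdx h a i with
  | 0 => 0
  | t + 1 => psi h a t

open Classical in
/-- the auxiliary 3-coloring encoding `c` in unary along blocks. -/
noncomputable def Dcol (h c : Ordinal → ℕ → ℕ) (a : Ordinal) (i : ℕ) : ℕ :=
  if i = 0 then 0
  else if ∃ t, psi h a t = i then 2
  else if i ≤ bPrev h a i + c a (bIdx h a i) then 1 else 0

lemma Dcol_lt3 (h c : Ordinal → ℕ → ℕ) (a : Ordinal) (i : ℕ) : Dcol h c a i < 3 := by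
  unfold Dcol
  split_ifs <;> omega

lemma Dcol_anchor (h c : Ordinal → ℕ → ℕ) (a : Ordinal) (t : ℕ) :
    Dcol h c a (psi h a t) = 2 := by
  unfold Dcol
  rw [if_neg (by have := psi_ge h a t; omega), if_pos ⟨t, rfl⟩]

lemma Dcol_interior (h c : Ordinal → ℕ → ℕ) (a : Ordinal) {t i : ℕ}
    (h1 : psi h a t < i) (h2 : i < psi h a (t + 1)) :
    Dcol h c a i = if i ≤ psi h a t + c a (t + 1) then 1 else 0 := by
  have hmono := psi_strictMono h a
  have hnoanchor : ¬∃ s, psi h a s = i := by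
    rintro ⟨s, rfl⟩
    rcases le_or_gt s t with hs | hs
    · have hle : psi h a s ≤ psi h a t := hmono.monotone hs
      omega
    · have hle : psi h a (t + 1) ≤ psi h a s := hmono.monotone (by omega : t + 1 ≤ s)
      omega
  have hb : bIdx h a i = t + 1 := by
    rw [bIdx, Nat.find_eq_iff]
    refine ⟨h2, fun s hs hlt => ?_⟩
    have : psi h a s ≤ psi h a t := hmono.monotone (by omega)
    omega
  have hp : bPrev h a i = psi h a t := by
    rw [bPrev, hb]
  unfold Dcol
  rw [if_neg (by have := psi_ge h a t; omega), if_neg hnoanchor, hb, hp]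

/-- reading the unary code below an anchor. -/
def scanCount (v : ℕ → ℕ) (k : ℕ) : ℕ :=
  ((Finset.Ioo (Nat.findGreatest (fun i => v i = 2) (k - 1)) k).filter
    (fun i => v i = 1)).card

lemma fg_congr {P Q : ℕ → Prop} [DecidablePred P] [DecidablePred Q] {b : ℕ}
    (hb : ∀ i ≤ b, (P i ↔ Q i)) : Nat.findGreatest P b = Nat.findGreatest Q b := by
  induction b with
  | zero => rfl
  | succ k ih =>
      rw [Nat.findGreatest_succ, Nat.findGreatest_succ]
      by_cases hp : P (k + 1)
      · rw [if_pos hp, if_pos ((hb (k + 1) le_rfl).mp hp)]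
      · rw [if_neg hp, if_neg (fun hq => hp ((hb (k + 1) le_rfl).mpr hq))]
        exact ih fun i hi => hb i (by omega)

lemma scanCount_congr {v w : ℕ → ℕ} {k : ℕ} (hvw : ∀ i ≤ k, v i = w i) :
    scanCount v k = scanCount w k := by
  unfold scanCount
  have h1 : Nat.findGreatest (fun i => v i = 2) (k - 1) =
      Nat.findGreatest (fun i => w i = 2) (k - 1) :=
    fg_congr fun i hi => by rw [hvw i (by omega)]
  rw [h1]
  congr 1
  apply Finset.filter_congr
  intro i hi
  rw [hvw i (le_of_lt (Finset.mem_Ioo.mp hi).2)]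

lemma scan_eval {v : ℕ → ℕ} {a cc hh : ℕ} (ha : 1 ≤ a) (ha2 : v a = 2)
    (hint : ∀ i, a < i → i < a + hh + 1 → v i = if i ≤ a + cc then 1 else 0)
    (hc : cc < hh) :
    scanCount v (a + hh + 1) = cc := by
  have hfg : Nat.findGreatest (fun i => v i = 2) (a + hh) = a := by
    rw [Nat.findGreatest_eq_iff]
    refine ⟨by omega, fun _ => ha2, fun n hn1 hn2 => ?_⟩
    rw [hint n hn1 (by omega)]
    split_ifs <;> simp
  have hsub : a + hh + 1 - 1 = a + hh := by omega
  rw [scanCount, hsub, hfg]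
  have hset : (Finset.Ioo a (a + hh + 1)).filter (fun i => v i = 1) =
      Finset.Ioc a (a + cc) := by
    ext i
    simp only [Finset.mem_filter, Finset.mem_Ioo, Finset.mem_Ioc]
    constructor
    · rintro ⟨⟨hi1, hi2⟩, hi3⟩
      rw [hint i hi1 hi2] at hi3
      constructor
      · exact hi1
      · by_contra hcon
        rw [if_neg (by omega)] at hi3
        omega
    · rintro ⟨hi1, hi2⟩
      have hi2' : i < a + hh + 1 := by omega
      refine ⟨⟨hi1, hi2'⟩, ?_⟩
      rw [hint i hi1 hi2', if_pos hi2]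
  rw [hset, Nat.card_Ioc]
  omega

end Stmt5Aux


/-- If a ladder system `ζ` on `S ⊆ [ω, ω₁)` satisfies 3-uniformization and each
`h_α : ω → ω` takes positive values, then there is a ladder system `η` on `S` satisfying
`H`-uniformization. -/
theorem stmt5 (S : Set Ordinal) (hS : S ⊆ Set.Ico (Ordinal.omega0) omega1)
    (ζ : Ordinal → ℕ → Ordinal) (hζ : ∀ α ∈ S, IsLadderAt α (ζ α))
    (hunif : LambdaUnif S ζ 3)
    (h : Ordinal → ℕ → ℕ) (hpos : ∀ α ∈ S, ∀ n, 0 < h α n) :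
    ∃ η : Ordinal → ℕ → Ordinal,
      (∀ α ∈ S, IsLadderAt α (η α)) ∧ UnifBelow S η h := by
  classical
  have hζlt : ∀ α ∈ S, ∀ i, ζ α i < omega1 := by
    intro α hα i
    obtain ⟨δ, nn, hlim, hαeq, hsm, hlt, hcof⟩ := hζ α hα
    have hδ : δ < omega1 :=
      lt_of_le_of_lt (by rw [hαeq]; exact le_self_add) (hS hα).2
    exact (hlt i).trans hδ
  refine ⟨fun a n => Stmt5Aux.cd (ζ a) (Stmt5Aux.psi h a n), ?_, ?_⟩
  · intro α hα
    obtain ⟨δ, nn, hlim, hαeq, hsm, hlt, hcof⟩ := hζ α hα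
    refine ⟨δ, nn, hlim, hαeq, ?_, ?_, ?_⟩
    · exact (Stmt5Aux.cd_strictMono (hζlt α hα)).comp (Stmt5Aux.psi_strictMono h α)
    · intro n
      exact Stmt5Aux.cd_lt_limit hlim hlt _
    · intro b hb
      obtain ⟨i, hi⟩ := hcof b hb
      refine ⟨i, hi.trans (le_trans (hsm.monotone ?_) (Stmt5Aux.cd_ge _))⟩
      have := Stmt5Aux.psi_ge h α i
      omega
  · intro c hc
    obtain ⟨f, fs, hf⟩ := hunif (Stmt5Aux.Dcol h c) (fun α _ n => Stmt5Aux.Dcol_lt3 h c α n)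
    refine ⟨fun γ =>
      if hw : ∃ q : Ordinal × ℕ, q.1 ∈ S ∧
          Stmt5Aux.cd (ζ q.1) (Stmt5Aux.psi h q.1 q.2) = γ then
        Stmt5Aux.scanCount (fun i => f (ζ hw.choose.1 i))
          (Stmt5Aux.psi h hw.choose.1 hw.choose.2)
      else 0, fun a => fs a + 1, ?_⟩
    intro β hβ m hm
    simp only at hm ⊢
    obtain ⟨m', rfl⟩ : ∃ m', m = m' + 1 := ⟨m - 1, by omega⟩
    have hw : ∃ q : Ordinal × ℕ, q.1 ∈ S ∧
        Stmt5Aux.cd (ζ q.1) (Stmt5Aux.psi h q.1 q.2) =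
          Stmt5Aux.cd (ζ β) (Stmt5Aux.psi h β (m' + 1)) := ⟨(β, m' + 1), hβ, rfl⟩
    rw [dif_pos hw]
    obtain ⟨hq1, hq2⟩ := hw.choose_spec
    obtain ⟨hkeq, hgeq⟩ := Stmt5Aux.cd_inj (hζlt _ hq1) (hζlt β hβ) hq2
    rw [Stmt5Aux.scanCount_congr (w := fun i => f (ζ β i))
      (fun i hi => by rw [hgeq i hi]), hkeq]
    have hge1 := Stmt5Aux.psi_ge h β m'
    have hfsle : fs β ≤ Stmt5Aux.psi h β m' := by omega
    rw [Stmt5Aux.psi_succ, ← add_assoc]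
    apply Stmt5Aux.scan_eval
    · omega
    · rw [hf β hβ _ hfsle]
      exact Stmt5Aux.Dcol_anchor h c β m'
    · intro i h1 h2
      have hfsi : fs β ≤ i := by omega
      rw [hf β hβ i hfsi]
      exact Stmt5Aux.Dcol_interior h c β h1 (by rw [Stmt5Aux.psi_succ]; omega)
    · exact hc β hβ (m' + 1)
end

section
/- Let S be a stationary subset of lim(ω₁). If every ladder system on S satisfies 2-uniformization, then every ladder system on S satisfies ω-uniformization. -/
open Ordinal Set

namespace Stmt8Aux

noncomputable def oNat (β : Ordinal) : ℕ := Cardinal.toNat β.card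

@[simp] lemma oNat_natCast (m : ℕ) : oNat (m : Ordinal) = m := by
  simp [oNat, Ordinal.card_nat]

noncomputable def obase (β : Ordinal) : Ordinal := Ordinal.omega0 * (β / Ordinal.omega0)

noncomputable def ooff (β : Ordinal) : ℕ := oNat (β % Ordinal.omega0)

lemma mod_omega_eq (β : Ordinal) : β % Ordinal.omega0 = (ooff β : Ordinal) := by
  obtain ⟨m, hm⟩ := Ordinal.lt_omega0.mp (Ordinal.mod_lt β Ordinal.omega0_ne_zero)
  rw [hm]; simp [ooff, hm]

lemma obase_add_ooff (β : Ordinal) : obase β + (ooff β : Ordinal) = β := by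
  rw [← mod_omega_eq]; exact Ordinal.div_add_mod β Ordinal.omega0

lemma obase_le (β : Ordinal) : obase β ≤ β := by
  conv_rhs => rw [← obase_add_ooff β]
  exact le_self_add

noncomputable def pt (β : Ordinal) (t : ℕ) : Ordinal :=
  obase β + ((Nat.pair (ooff β) t : ℕ) : Ordinal)

lemma obase_addNat (q : Ordinal) (m : ℕ) :
    obase (Ordinal.omega0 * q + (m : Ordinal)) = Ordinal.omega0 * q := by
  rw [obase, Ordinal.mul_add_div _ Ordinal.omega0_ne_zero,
    Ordinal.div_eq_zero_of_lt (Ordinal.nat_lt_omega0 m), add_zero]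

lemma ooff_addNat (q : Ordinal) (m : ℕ) :
    ooff (Ordinal.omega0 * q + (m : Ordinal)) = m := by
  rw [ooff, Ordinal.mul_add_mod_self, Ordinal.mod_eq_of_lt (Ordinal.nat_lt_omega0 m),
    oNat_natCast]

lemma pt_eq (β : Ordinal) (t : ℕ) : pt β t =
    Ordinal.omega0 * (β / Ordinal.omega0) + ((Nat.pair (ooff β) t : ℕ) : Ordinal) := rfl

lemma obase_pt (β : Ordinal) (t : ℕ) : obase (pt β t) = obase β := by
  rw [pt_eq, obase_addNat]; rfl

lemma ooff_pt (β : Ordinal) (t : ℕ) : ooff (pt β t) = Nat.pair (ooff β) t := by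
  rw [pt_eq, ooff_addNat]

lemma le_pt (β : Ordinal) (t : ℕ) : β ≤ pt β t := by
  conv_lhs => rw [← obase_add_ooff β]
  exact add_le_add le_rfl (by exact_mod_cast Nat.left_le_pair (ooff β) t)

lemma add_nat_lt_limit {δ α : Ordinal} (hδ : Order.IsSuccLimit δ) (h : α < δ) (m : ℕ) :
    α + (m : Ordinal) < δ := by
  induction m with
  | zero => simpa using h
  | succ k ih =>
      rw [Nat.cast_add, Nat.cast_one, ← add_assoc, Ordinal.add_one_eq_succ]
      exact hδ.succ_lt ih

lemma pt_lt_limit {δ β : Ordinal} (hδ : Order.IsSuccLimit δ) (hβ : β < δ) (t : ℕ) : pt β t < δ :=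
  add_nat_lt_limit hδ (lt_of_le_of_lt (obase_le β) hβ) _

def Tset (η : Ordinal → ℕ → Ordinal) (c : Ordinal → ℕ → ℕ) (δ : Ordinal) : Set Ordinal :=
  {p | ∃ n t, t ≤ c δ n ∧ p = pt (η δ n) t}

noncomputable def enum (η : Ordinal → ℕ → Ordinal) (c : Ordinal → ℕ → ℕ) (δ : Ordinal) :
    ℕ → Ordinal
  | 0 => sInf (Tset η c δ)
  | (m + 1) => sInf (Tset η c δ ∩ Set.Ioi (enum η c δ m))

section

variable {η : Ordinal → ℕ → Ordinal} {c : Ordinal → ℕ → ℕ} {δ : Ordinal}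

lemma Tset_subset (hlim : Order.IsSuccLimit δ) (hlad : IsLadderOn δ (η δ)) : Tset η c δ ⊆ Set.Iio δ := by
  rintro p ⟨n, t, -, rfl⟩
  exact pt_lt_limit hlim (hlad.2.1 n) t

lemma Tset_unbounded (hlad : IsLadderOn δ (η δ)) : ∀ β < δ, ∃ p ∈ Tset η c δ, β ≤ p := by
  intro β hβ
  obtain ⟨n, hn⟩ := hlad.2.2 β hβ
  exact ⟨pt (η δ n) 0, ⟨n, 0, Nat.zero_le _, rfl⟩, hn.trans (le_pt _ _)⟩

lemma Tset_initial_finite (hlad : IsLadderOn δ (η δ)) {β : Ordinal} (hβ : β < δ) :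
    (Tset η c δ ∩ Set.Iio β).Finite := by
  obtain ⟨N, hN⟩ := hlad.2.2 β hβ
  have hsub : Tset η c δ ∩ Set.Iio β ⊆
      ⋃ n ∈ Set.Iio N, (pt (η δ n)) '' (Set.Iic (c δ n)) := by
    rintro p ⟨⟨n, t, ht, rfl⟩, hp⟩
    have hnN : n < N := by
      by_contra hcon
      have : β ≤ pt (η δ n) t :=
        (hN.trans (hlad.1.monotone (not_lt.mp hcon))).trans (le_pt _ _)
      exact absurd hp (not_lt.mpr this)
    exact Set.mem_biUnion hnN ⟨t, ht, rfl⟩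
  exact Set.Finite.subset
    (Set.Finite.biUnion (Set.finite_Iio N) fun n _ => (Set.finite_Iic _).image _) hsub

lemma enum_mem (hlim : Order.IsSuccLimit δ) (hlad : IsLadderOn δ (η δ)) : ∀ m, enum η c δ m ∈ Tset η c δ := by
  intro m
  induction m with
  | zero =>
      obtain ⟨p, hp, -⟩ := Tset_unbounded hlad 0 hlim.pos
      exact csInf_mem ⟨p, hp⟩
  | succ k ih =>
      have hk : enum η c δ k < δ := Tset_subset hlim hlad ih
      obtain ⟨p, hp, hle⟩ := Tset_unbounded hlad (enum η c δ k + 1)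
        (by rw [Ordinal.add_one_eq_succ]; exact hlim.succ_lt hk)
      have : (Tset η c δ ∩ Set.Ioi (enum η c δ k)).Nonempty :=
        ⟨p, hp, lt_of_lt_of_le (lt_of_lt_of_le (lt_add_one _) le_rfl) hle⟩
      exact (csInf_mem this).1

lemma enum_lt (hlim : Order.IsSuccLimit δ) (hlad : IsLadderOn δ (η δ)) : ∀ m, enum η c δ m < δ :=
  fun m => Tset_subset hlim hlad (enum_mem hlim hlad m)

lemma enum_strictMono (hlim : Order.IsSuccLimit δ) (hlad : IsLadderOn δ (η δ)) : StrictMono (enum η c δ) := by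
  apply strictMono_nat_of_lt_succ
  intro m
  have hk : enum η c δ m < δ := enum_lt hlim hlad m
  obtain ⟨p, hp, hle⟩ := Tset_unbounded hlad (enum η c δ m + 1)
    (by rw [Ordinal.add_one_eq_succ]; exact hlim.succ_lt hk)
  have hne : (Tset η c δ ∩ Set.Ioi (enum η c δ m)).Nonempty :=
    ⟨p, hp, lt_of_lt_of_le (lt_add_one _) hle⟩
  exact (csInf_mem hne).2

lemma enum_surj (hlim : Order.IsSuccLimit δ) (hlad : IsLadderOn δ (η δ)) : ∀ p ∈ Tset η c δ, ∃ m, enum η c δ m = p := by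
  classical
  intro p hp
  have hex : ∃ m, p ≤ enum η c δ m := by
    by_contra hcon
    push_neg at hcon
    have hr : Set.range (enum η c δ) ⊆ Tset η c δ ∩ Set.Iio p := by
      rintro q ⟨m, rfl⟩
      exact ⟨enum_mem hlim hlad m, hcon m⟩
    exact Set.infinite_range_of_injective (enum_strictMono hlim hlad).injective
      (Set.Finite.subset (Tset_initial_finite hlad (Tset_subset hlim hlad hp)) hr)
  refine ⟨Nat.find hex, ?_⟩
  have hspec : p ≤ enum η c δ (Nat.find hex) := Nat.find_spec hex
  rcases Nat.eq_zero_or_pos (Nat.find hex) with h0 | hpos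
  · rw [h0]
    rw [h0] at hspec
    exact le_antisymm (csInf_le (OrderBot.bddBelow _) hp) hspec
  · obtain ⟨k, hk⟩ := Nat.exists_eq_succ_of_ne_zero (Nat.pos_iff_ne_zero.mp hpos)
    have hklt : ¬ p ≤ enum η c δ k := Nat.find_min hex (by omega)
    rw [hk] at hspec ⊢
    exact le_antisymm (csInf_le (OrderBot.bddBelow _) ⟨hp, not_le.mp hklt⟩) hspec

lemma enum_ladder (hlim : Order.IsSuccLimit δ) (hlad : IsLadderOn δ (η δ)) : IsLadderOn δ (enum η c δ) := by
  refine ⟨enum_strictMono hlim hlad, enum_lt hlim hlad, fun β hβ => ?_⟩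
  obtain ⟨p, hp, hle⟩ := Tset_unbounded hlad β hβ
  obtain ⟨m, hm⟩ := enum_surj hlim hlad p hp
  exact ⟨m, hm ▸ hle⟩

end

open Classical in
noncomputable def col (η : Ordinal → ℕ → Ordinal) (c : Ordinal → ℕ → ℕ) (δ : Ordinal)
    (m : ℕ) : ℕ :=
  if (∃ n, η δ n = obase (enum η c δ m) +
        (((Nat.unpair (ooff (enum η c δ m))).1 : ℕ) : Ordinal)
      ∧ (Nat.unpair (ooff (enum η c δ m))).2 < c δ n) then 1 else 0

lemma col_lt_two (η : Ordinal → ℕ → Ordinal) (c : Ordinal → ℕ → ℕ) (δ : Ordinal) (m : ℕ) :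
    col η c δ m < 2 := by
  unfold col; split <;> omega

noncomputable def dec (f : Ordinal → ℕ) (β : Ordinal) : ℕ := sInf {t : ℕ | f (pt β t) = 0}

end Stmt8Aux

/-- Let `S` be a stationary subset of `lim(ω₁)`.  If every ladder system on `S` satisfies
2-uniformization, then every ladder system on `S` satisfies `ω`-uniformization. -/
theorem stmt8 (S : Set Ordinal) (hS : ∀ δ ∈ S, δ < omega1 ∧ Order.IsSuccLimit δ)
    (hstat : IsStat S)
    (h2 : ∀ η : Ordinal → ℕ → Ordinal, (∀ δ ∈ S, IsLadderOn δ (η δ)) → LambdaUnif S η 2) :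
    ∀ η : Ordinal → ℕ → Ordinal, (∀ δ ∈ S, IsLadderOn δ (η δ)) → OmegaUnif S η := by
  classical
  intro η hη c
  have hνlad : ∀ δ ∈ S, IsLadderOn δ (Stmt8Aux.enum η c δ) := fun δ hδ =>
    Stmt8Aux.enum_ladder (hS δ hδ).2 (hη δ hδ)
  obtain ⟨f, fs, hf⟩ := h2 (Stmt8Aux.enum η c) hνlad (Stmt8Aux.col η c)
    (fun α _ m => Stmt8Aux.col_lt_two η c α m)
  have hFs : ∀ α ∈ S, ∃ N, Stmt8Aux.enum η c α (fs α) < η α N := by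
    intro α hα
    have hlim := (hS α hα).2
    have hlt : Stmt8Aux.enum η c α (fs α) < α :=
      Stmt8Aux.enum_lt hlim (hη α hα) (fs α)
    obtain ⟨N, hN⟩ := (hη α hα).2.2 (Stmt8Aux.enum η c α (fs α) + 1)
      (by rw [Ordinal.add_one_eq_succ]; exact hlim.succ_lt hlt)
    exact ⟨N, lt_of_lt_of_le (lt_add_one _) hN⟩
  refine ⟨Stmt8Aux.dec f,
    fun α => if h : ∃ N, Stmt8Aux.enum η c α (fs α) < η α N then Nat.find h else 0, ?_⟩
  intro α hα n hn
  have hlim := (hS α hα).2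
  have hlad := hη α hα
  have hex := hFs α hα
  simp only [dif_pos hex] at hn
  have hνfs_lt : Stmt8Aux.enum η c α (fs α) < η α n :=
    lt_of_lt_of_le (Nat.find_spec hex) (hlad.1.monotone hn)
  set β := η α n with hβ
  -- for each t ≤ c α n, compute f at the coding point
  have key : ∀ t ≤ c α n, f (Stmt8Aux.pt β t) = if t < c α n then 1 else 0 := by
    intro t ht
    have hpT : Stmt8Aux.pt β t ∈ Stmt8Aux.Tset η c α := ⟨n, t, ht, rfl⟩
    obtain ⟨m, hm⟩ := Stmt8Aux.enum_surj hlim hlad _ hpT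
    have hmfs : fs α < m := by
      have h1 : Stmt8Aux.enum η c α (fs α) < Stmt8Aux.enum η c α m := by
        rw [hm]; exact lt_of_lt_of_le hνfs_lt (Stmt8Aux.le_pt β t)
      exact (Stmt8Aux.enum_strictMono hlim hlad).lt_iff_lt.mp h1
    have hfcol : f (Stmt8Aux.pt β t) = Stmt8Aux.col η c α m := by
      rw [← hm]; exact hf α hα m (le_of_lt hmfs)
    rw [hfcol]
    unfold Stmt8Aux.col
    rw [hm, Stmt8Aux.ooff_pt, Stmt8Aux.obase_pt, Nat.unpair_pair]
    simp only [Stmt8Aux.obase_add_ooff]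
    by_cases hc : t < c α n
    · rw [if_pos hc, if_pos ⟨n, rfl, hc⟩]
    · rw [if_neg hc, if_neg]
      rintro ⟨n', hn', hlt'⟩
      have : n' = n := hlad.1.injective hn'
      rw [this] at hlt'
      exact hc hlt'
  -- now the decoded value is exactly c α n
  have hmem : c α n ∈ {t : ℕ | f (Stmt8Aux.pt β t) = 0} := by
    have := key (c α n) le_rfl
    simpa using this
  refine le_antisymm (Nat.sInf_le hmem) (le_csInf ⟨_, hmem⟩ ?_)
  intro t htmem
  by_contra hcon
  push_neg at hcon
  have := key t (le_of_lt hcon)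
  rw [if_pos hcon] at this
  rw [Set.mem_setOf_eq, this] at htmem
  exact one_ne_zero htmem
end
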